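/- Fix p > 1, t > 0, ρ > t + 1. Let λ₀⁻(E_p) ≥ λ₁⁻(E_p) ≥ … denote the absolute values of the negative eigenvalues of E_p listed in non-increasing order. Then for every k ≥ 1, λ_k⁻(E_p) ≤ p^(−ρk)·λ₀⁻(E_p). -/

import Mathlib

open Real Filter Topology
set_option synthInstance.maxHeartbeats 1000000
set_option maxHeartbeats 1000000
noncomputable section

/-- The entries of the matrix `E_p`. -/
noncomputable def Ep (p t ρ : ℝ) (j k : ℕ) : ℝ :=
  p ^ (-(ρ + t) * j / 2) * p ^ (t * (max j k : ℕ)) * p ^ (-(ρ + t) * k / 2)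

abbrev E2 := lp (fun _ : ℕ => ℝ) 2

def rr (p : ℝ) : ℝ := p ^ (-(2:ℝ)⁻¹)

section kernel
variable {p t ρ : ℝ} (hp : 1 < p) (ht : 0 < t) (hρ : t + 1 < ρ)
include hp

lemma rr_pos : 0 < rr p := Real.rpow_pos_of_pos (lt_trans one_pos hp) _

lemma rr_lt_one : rr p < 1 := by
  have := Real.rpow_lt_one_of_one_lt_of_neg hp (show -(2:ℝ)⁻¹ < 0 by norm_num)
  simpa [rr] using this

lemma ep_pos (j k : ℕ) : 0 < Ep p t ρ j k := by
  have h0 : (0:ℝ) < p := lt_trans one_pos hp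
  unfold Ep
  positivity

lemma ep_eq_rpow (j k : ℕ) :
    Ep p t ρ j k = p ^ (-(ρ + t) * j / 2 + t * (max j k : ℕ) + -(ρ + t) * k / 2) := by
  have h0 : (0:ℝ) < p := lt_trans one_pos hp
  rw [Ep, ← Real.rpow_add h0, ← Real.rpow_add h0]

lemma rr_pow (j : ℕ) : rr p ^ j = p ^ (-(2:ℝ)⁻¹ * j) := by
  have h0 : (0:ℝ) ≤ p := le_of_lt (lt_trans one_pos hp)
  rw [rr, ← Real.rpow_natCast (p ^ (-(2:ℝ)⁻¹)) j, ← Real.rpow_mul h0]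

include ht hρ in
lemma ep_le (j k : ℕ) : Ep p t ρ j k ≤ rr p ^ j * rr p ^ k := by
  have h0 : (0:ℝ) < p := lt_trans one_pos hp
  rw [ep_eq_rpow hp, rr_pow hp, rr_pow hp, ← Real.rpow_add h0]
  apply Real.rpow_le_rpow_left_iff hp |>.mpr
  have hmax : ((max j k : ℕ) : ℝ) ≤ (j : ℝ) + k := by
    have := max_le_add_of_nonneg (Nat.zero_le j) (Nat.zero_le k)
    exact_mod_cast this
  have hj : (0:ℝ) ≤ j := Nat.cast_nonneg j
  have hk : (0:ℝ) ≤ k := Nat.cast_nonneg k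
  nlinarith [mul_le_mul_of_nonneg_left hmax (le_of_lt ht)]


lemma ep_shift (j k : ℕ) : Ep p t ρ (j+1) (k+1) = p ^ (-ρ) * Ep p t ρ j k := by
  have h0 : (0:ℝ) < p := lt_trans one_pos hp
  rw [ep_eq_rpow hp, ep_eq_rpow hp, ← Real.rpow_add h0]
  congr 1
  have : max (j+1) (k+1) = max j k + 1 := by omega
  rw [this]
  push_cast
  ring

omit hp in
lemma ep_symm (j k : ℕ) : Ep p t ρ j k = Ep p t ρ k j := by
  rw [Ep, Ep, max_comm]
  ring
end kernel
section summ
open scoped NNReal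
variable {p t ρ : ℝ} (hp : 1 < p) (ht : 0 < t) (hρ : t + 1 < ρ)

lemma sq_summable (x : E2) : Summable (fun k => (x k)^2) := by
  have h := lp.memℓp x
  rw [memℓp_gen_iff (p := 2) (by norm_num)] at h
  have he : ∀ k : ℕ, ‖x k‖ ^ ((2:ENNReal).toReal) = (x k)^2 := by
    intro k
    rw [ENNReal.toReal_ofNat, Real.rpow_two, Real.norm_eq_abs, sq_abs]
  simpa [he] using h

lemma norm_sq_eq (x : E2) : ‖x‖^2 = ∑' k, (x k)^2 := by
  have h := lp.norm_rpow_eq_tsum (p := 2) (by norm_num) x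
  simp only [ENNReal.toReal_ofNat, Real.rpow_two, Real.norm_eq_abs, sq_abs] at h
  exact_mod_cast h

include hp in
lemma geom_summable : Summable (fun k : ℕ => rr p ^ k) :=
  summable_geometric_of_lt_one (le_of_lt (rr_pos hp)) (rr_lt_one hp)

include hp in
lemma sum_rabs (x : E2) : Summable (fun k => rr p ^ k * |x k|) := by
  have h1 : Summable (fun k : ℕ => (rr p ^ k)^2) := by
    have := (geom_summable (p := p) hp).mul_of_nonneg (geom_summable (p := p) hp)
      (fun k => le_of_lt (pow_pos (rr_pos hp) k)) (fun k => le_of_lt (pow_pos (rr_pos hp) k))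
    -- simpler: (rr p ^ k)^2 = (rr p ^ 2)^k
    have h2 : Summable (fun k : ℕ => (rr p ^ 2) ^ k) :=
      summable_geometric_of_lt_one (le_of_lt (pow_pos (rr_pos hp) 2))
        (by nlinarith [rr_pos hp, rr_lt_one hp])
    simpa [← pow_mul, mul_comm 2] using h2
  apply Summable.of_nonneg_of_le
    (fun k => mul_nonneg (pow_nonneg (le_of_lt (rr_pos hp)) k) (abs_nonneg _))
    (fun k => ?_) ((h1.add (sq_summable x)).div_const 2)
  nlinarith [sq_nonneg (rr p ^ k - |x k|), sq_abs (x k)]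

/-- the fixed `ℓ²` element with entries `rr p ^ k` -/
def Rgeom (hp : 1 < p) : E2 :=
  ⟨fun k => rr p ^ k, by
    show Memℓp _ 2
    rw [memℓp_gen_iff (p := 2) (by norm_num)]
    have h2 : Summable (fun k : ℕ => (rr p ^ 2) ^ k) :=
      summable_geometric_of_lt_one (le_of_lt (pow_pos (rr_pos hp) 2))
        (by nlinarith [rr_pos hp, rr_lt_one hp])
    have he : ∀ k : ℕ, ‖rr p ^ k‖ ^ ((2:ENNReal).toReal) = (rr p ^ 2)^k := by
      intro k
      rw [ENNReal.toReal_ofNat, Real.rpow_two, Real.norm_eq_abs, sq_abs, ← pow_mul, ← pow_mul,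
        mul_comm]
    exact h2.congr fun k => (he k).symm⟩

/-- absolute value of an `ℓ²` element -/
def labs (x : E2) : E2 :=
  ⟨fun k => |x k|, by
    show Memℓp _ 2
    have h := lp.memℓp x
    rw [memℓp_gen_iff (p := 2) (by norm_num)] at h ⊢
    simpa using h⟩

lemma labs_norm (x : E2) : ‖labs x‖ = ‖x‖ := by
  have h1 : ‖labs x‖^2 = ‖x‖^2 := by
    rw [norm_sq_eq, norm_sq_eq]
    congr 1; ext k
    show |x k|^2 = _
    rw [sq_abs]
  have h2 := congrArg Real.sqrt h1
  rwa [Real.sqrt_sq (norm_nonneg _), Real.sqrt_sq (norm_nonneg _)] at h2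

include hp in
lemma tsum_rabs_le (x : E2) : ∑' k, rr p ^ k * |x k| ≤ ‖Rgeom hp‖ * ‖x‖ := by
  have h : ∑' k, rr p ^ k * |x k| = (inner ℝ (Rgeom hp) (labs x) : ℝ) := by
    rw [lp.inner_eq_tsum]
    simp [RCLike.inner_apply]
    exact tsum_congr fun k => mul_comm _ _
  rw [h, ← labs_norm x]
  exact real_inner_le_norm _ _
end summ
section oper
variable {p t ρ : ℝ} (hp : 1 < p) (ht : 0 < t) (hρ : t + 1 < ρ)
  {A : E2 →L[ℝ] E2}
  (hA : ∀ (x : E2) (j : ℕ), (A x : ℕ → ℝ) j = ∑' k : ℕ, Ep p t ρ j k * (x : ℕ → ℝ) k)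

include hp ht hρ

lemma row_summable (x : E2) (j : ℕ) : Summable fun k => Ep p t ρ j k * x k := by
  apply Summable.of_abs
  apply Summable.of_nonneg_of_le (fun k => abs_nonneg _) (fun k => ?_)
    (((sum_rabs hp x).mul_left (rr p ^ j)))
  rw [abs_mul]
  rw [abs_of_pos (ep_pos hp j k)]
  calc Ep p t ρ j k * |x k| ≤ rr p ^ j * rr p ^ k * |x k| :=
        mul_le_mul_of_nonneg_right (ep_le hp ht hρ j k) (abs_nonneg _)
    _ = rr p ^ j * (rr p ^ k * |x k|) := by ring

include hA in
lemma row_abs_le (x : E2) (j : ℕ) : |(A x : ℕ → ℝ) j| ≤ rr p ^ j * (‖Rgeom hp‖ * ‖x‖) := by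
  rw [hA x j]
  have h1 : |∑' k, Ep p t ρ j k * x k| ≤ ∑' k, |Ep p t ρ j k * x k| := by
    have := norm_tsum_le_tsum_norm (f := fun k => Ep p t ρ j k * x k)
      ((row_summable hp ht hρ x j).abs.congr (fun k => (Real.norm_eq_abs _).symm))
    simp only [Real.norm_eq_abs] at this
    exact this
  have h2 : ∑' k, |Ep p t ρ j k * x k| ≤ ∑' k, rr p ^ j * (rr p ^ k * |x k|) := by
    apply Summable.tsum_le_tsum _ ((row_summable hp ht hρ x j).abs) ((sum_rabs hp x).mul_left _)
    intro k
    rw [abs_mul, abs_of_pos (ep_pos hp j k)]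
    calc Ep p t ρ j k * |x k| ≤ rr p ^ j * rr p ^ k * |x k| :=
          mul_le_mul_of_nonneg_right (ep_le hp ht hρ j k) (abs_nonneg _)
      _ = rr p ^ j * (rr p ^ k * |x k|) := by ring
  have h3 : ∑' k, rr p ^ j * (rr p ^ k * |x k|) = rr p ^ j * ∑' k, rr p ^ k * |x k| :=
    tsum_mul_left
  calc |(∑' k, Ep p t ρ j k * x k)| ≤ rr p ^ j * ∑' k, rr p ^ k * |x k| := by
        rw [← h3]; exact le_trans h1 h2
    _ ≤ rr p ^ j * (‖Rgeom hp‖ * ‖x‖) :=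
        mul_le_mul_of_nonneg_left (tsum_rabs_le hp x) (le_of_lt (pow_pos (rr_pos hp) j))

omit hp ht hρ in
lemma inner_eq_tsum' (x y : E2) : (inner ℝ x y : ℝ) = ∑' k, x k * y k := by
  rw [lp.inner_eq_tsum]; simp [RCLike.inner_apply]
  exact tsum_congr fun k => mul_comm _ _

lemma summable_prod (x y : E2) :
    Summable fun jk : ℕ × ℕ => Ep p t ρ jk.1 jk.2 * x jk.2 * y jk.1 := by
  apply Summable.of_abs
  apply Summable.of_nonneg_of_le (fun jk => abs_nonneg _) (fun jk => ?_)
    (((sum_rabs hp y).mul_of_nonneg (sum_rabs hp x)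
      (fun j => mul_nonneg (pow_nonneg (le_of_lt (rr_pos hp)) _) (abs_nonneg _))
      (fun k => mul_nonneg (pow_nonneg (le_of_lt (rr_pos hp)) _) (abs_nonneg _))))
  obtain ⟨j, k⟩ := jk
  simp only [abs_mul, abs_of_pos (ep_pos hp j k)]
  calc Ep p t ρ j k * |x k| * |y j| ≤ rr p ^ j * rr p ^ k * |x k| * |y j| := by
        apply mul_le_mul_of_nonneg_right _ (abs_nonneg _)
        exact mul_le_mul_of_nonneg_right (ep_le hp ht hρ j k) (abs_nonneg _)
    _ = rr p ^ j * |y j| * (rr p ^ k * |x k|) := by ring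

include hA in
lemma symmA (x y : E2) : (inner ℝ (A x) y : ℝ) = inner ℝ x (A y) := by
  rw [inner_eq_tsum', inner_eq_tsum']
  have hxy : ∀ j, (A x : ℕ → ℝ) j * y j = ∑' k, Ep p t ρ j k * x k * y j := by
    intro j
    rw [hA x j, tsum_mul_right]
  have hyx : ∀ k, x k * (A y : ℕ → ℝ) k = ∑' j, Ep p t ρ j k * x k * y j := by
    intro k
    rw [hA y k, ← tsum_mul_left]
    congr 1; ext j
    rw [ep_symm (p := p) (t := t) (ρ := ρ) j k]
    ring
  calc ∑' j, (A x : ℕ → ℝ) j * y j = ∑' j, ∑' k, Ep p t ρ j k * x k * y j :=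
        tsum_congr hxy
    _ = ∑' k, ∑' j, Ep p t ρ j k * x k * y j := by
        refine (Summable.tsum_comm' (f := fun j k => Ep p t ρ j k * x k * y j)
          (summable_prod hp ht hρ x y) ?_ ?_).symm
        · intro j
          exact ((row_summable hp ht hρ x j).mul_right (y j))
        · intro k
          apply Summable.of_abs
          apply Summable.of_nonneg_of_le (fun j => abs_nonneg _) (fun j => ?_)
            (((sum_rabs hp y).mul_right (rr p ^ k * |x k|)))
          rw [abs_mul, abs_mul, abs_of_pos (ep_pos hp j k)]
          calc Ep p t ρ j k * |x k| * |y j| ≤ rr p ^ j * rr p ^ k * |x k| * |y j| := by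
                apply mul_le_mul_of_nonneg_right _ (abs_nonneg _)
                exact mul_le_mul_of_nonneg_right (ep_le hp ht hρ j k) (abs_nonneg _)
            _ = rr p ^ j * |y j| * (rr p ^ k * |x k|) := by ring
    _ = ∑' k, x k * (A y : ℕ → ℝ) k :=
        tsum_congr (fun k => (hyx k).symm)

include hA in
lemma symmA' : LinearMap.IsSymmetric (↑A : E2 →ₗ[ℝ] E2) := by
  intro x y
  exact symmA hp ht hρ hA x y
end oper
section compact
open Metric Set

/-- evaluation functional on `ℓ²` -/
def evCLM (j : ℕ) : E2 →L[ℝ] ℝ :=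
  LinearMap.mkContinuous
    { toFun := fun x => x j
      map_add' := fun x y => by
        show (↑(x + y) : ℕ → ℝ) j = _
        rw [lp.coeFn_add]; rfl
      map_smul' := fun c x => by
        show (↑(c • x) : ℕ → ℝ) j = _
        rw [lp.coeFn_smul]; rfl } 1
    (fun x => by
      simpa using lp.norm_apply_le_norm (by norm_num : (2:ENNReal) ≠ 0) x j)

@[simp] lemma evCLM_apply (j : ℕ) (x : E2) : evCLM j x = x j := rfl

lemma compact_smulRight (f : E2 →L[ℝ] ℝ) (y : E2) :
    IsCompactOperator ⇑(f.smulRight y) := by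
  refine ⟨(fun c : ℝ => c • y) '' (closedBall 0 ‖f‖), ?_, ?_⟩
  · exact (isCompact_closedBall 0 ‖f‖).image (by continuity)
  · filter_upwards [Metric.closedBall_mem_nhds (0 : E2) one_pos] with x hx
    refine ⟨f x, ?_, by simp⟩
    simp only [mem_closedBall, dist_zero_right] at hx ⊢
    calc ‖f x‖ ≤ ‖f‖ * ‖x‖ := f.le_opNorm x
      _ ≤ ‖f‖ * 1 := mul_le_mul_of_nonneg_left hx (norm_nonneg f)
      _ = ‖f‖ := mul_one _

lemma isCompactOperator_sum {ι : Type*} (s : Finset ι) (g : ι → E2 →L[ℝ] E2)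
    (h : ∀ i ∈ s, IsCompactOperator ⇑(g i)) : IsCompactOperator ⇑(∑ i ∈ s, g i) := by
  induction s using Finset.cons_induction with
  | empty => simpa using isCompactOperator_zero
  | cons a s ha ih =>
      rw [Finset.sum_cons]
      have he : ⇑(g a + ∑ i ∈ s, g i) = ⇑(g a) + ⇑(∑ i ∈ s, g i) := rfl
      rw [he]
      exact (h a (Finset.mem_cons_self _ _)).add (ih fun i hi => h i (Finset.mem_cons_of_mem hi))

/-- finite-rank truncation of `A` -/
def FnT (A : E2 →L[ℝ] E2) (n : ℕ) : E2 →L[ℝ] E2 :=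
  ∑ i ∈ Finset.range n, ((evCLM i).comp A).smulRight (lp.single 2 i 1)

lemma FnT_compact (A : E2 →L[ℝ] E2) (n : ℕ) : IsCompactOperator ⇑(FnT A n) :=
  isCompactOperator_sum _ _ (fun i _ => compact_smulRight _ _)

lemma FnT_apply (A : E2 →L[ℝ] E2) (n : ℕ) (x : E2) (j : ℕ) :
    (FnT A n x : ℕ → ℝ) j = if j < n then (A x : ℕ → ℝ) j else 0 := by
  rw [FnT, ContinuousLinearMap.sum_apply, lp.coeFn_sum, Finset.sum_apply]
  have he : ∀ i, ((((evCLM i).comp A).smulRight (lp.single 2 i 1)) x : ℕ → ℝ) j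
      = (if j = i then (A x : ℕ → ℝ) i else 0) := by
    intro i
    rw [ContinuousLinearMap.smulRight_apply, lp.coeFn_smul]
    have hs : ((lp.single 2 i (1:ℝ)) : ℕ → ℝ) j = if j = i then 1 else 0 := by
      rw [lp.single_apply]
      split <;> simp_all
    show ((evCLM i).comp A) x • ((lp.single 2 i (1:ℝ)) : ℕ → ℝ) j = _
    rw [hs]
    simp only [ContinuousLinearMap.comp_apply, evCLM_apply, smul_eq_mul]
    split <;> simp
  rw [Finset.sum_congr rfl (fun i _ => he i), Finset.sum_ite_eq]
  simp [Finset.mem_range]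
end compact
section climit
open Filter Topology
variable {p t ρ : ℝ} (hp : 1 < p) (ht : 0 < t) (hρ : t + 1 < ρ)
  {A : E2 →L[ℝ] E2}
  (hA : ∀ (x : E2) (j : ℕ), (A x : ℕ → ℝ) j = ∑' k : ℕ, Ep p t ρ j k * (x : ℕ → ℝ) k)

include hp ht hρ hA

lemma diff_sq_le (n : ℕ) (x : E2) :
    ‖A x - FnT A n x‖^2 ≤ (‖Rgeom hp‖ * ‖x‖)^2 * ((1 - rr p)⁻¹ * rr p ^ n) := by
  have hC : (0:ℝ) ≤ ‖Rgeom hp‖ * ‖x‖ := mul_nonneg (norm_nonneg _) (norm_nonneg _)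
  have hr0 := rr_pos hp
  have hr1 := rr_lt_one hp
  rw [norm_sq_eq]
  have hterm : ∀ j, ((A x - FnT A n x : E2) : ℕ → ℝ) j ^ 2
      ≤ (‖Rgeom hp‖ * ‖x‖)^2 * (rr p ^ n * rr p ^ j) := by
    intro j
    have hcoe : ((A x - FnT A n x : E2) : ℕ → ℝ) j = (A x : ℕ → ℝ) j - (FnT A n x : ℕ → ℝ) j := by
      rw [lp.coeFn_sub]; rfl
    rw [hcoe, FnT_apply]
    by_cases hj : j < n
    · simp only [hj, if_true, sub_self]
      have hnn : (0:ℝ) ≤ (‖Rgeom hp‖ * ‖x‖)^2 * (rr p ^ n * rr p ^ j) := by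
        have := rr_pos hp
        positivity
      simpa using hnn
    · simp only [hj, if_false, sub_zero]
      have h1 : |(A x : ℕ → ℝ) j| ≤ rr p ^ j * (‖Rgeom hp‖ * ‖x‖) := row_abs_le hp ht hρ hA x j
      have h2 : ((A x : ℕ → ℝ) j)^2 ≤ (rr p ^ j * (‖Rgeom hp‖ * ‖x‖))^2 := by
        rw [← sq_abs]
        exact pow_le_pow_left₀ (abs_nonneg _) h1 2
      refine le_trans h2 ?_
      have hjn : rr p ^ j ≤ rr p ^ n := pow_le_pow_of_le_one (le_of_lt hr0) (le_of_lt hr1) (le_of_not_gt hj)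
      calc (rr p ^ j * (‖Rgeom hp‖ * ‖x‖))^2
          = (‖Rgeom hp‖ * ‖x‖)^2 * (rr p ^ j * rr p ^ j) := by ring
        _ ≤ (‖Rgeom hp‖ * ‖x‖)^2 * (rr p ^ n * rr p ^ j) := by
            apply mul_le_mul_of_nonneg_left _ (sq_nonneg _)
            exact mul_le_mul_of_nonneg_right hjn (le_of_lt (pow_pos hr0 j))
  have hsum : Summable fun j => ((A x - FnT A n x : E2) : ℕ → ℝ) j ^ 2 := sq_summable _
  have hsum2 : Summable fun j : ℕ => (‖Rgeom hp‖ * ‖x‖)^2 * (rr p ^ n * rr p ^ j) := by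
    exact ((geom_summable hp).mul_left _).mul_left _
  calc ∑' j, ((A x - FnT A n x : E2) : ℕ → ℝ) j ^ 2
      ≤ ∑' j, (‖Rgeom hp‖ * ‖x‖)^2 * (rr p ^ n * rr p ^ j) := Summable.tsum_le_tsum hterm hsum hsum2
    _ = (‖Rgeom hp‖ * ‖x‖)^2 * (rr p ^ n * ∑' j, rr p ^ j) := by
        rw [tsum_mul_left, tsum_mul_left]
    _ = (‖Rgeom hp‖ * ‖x‖)^2 * ((1 - rr p)⁻¹ * rr p ^ n) := by
        rw [tsum_geometric_of_lt_one (le_of_lt hr0) hr1]; ring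

lemma opnorm_diff_le (n : ℕ) :
    ‖A - FnT A n‖ ≤ ‖Rgeom hp‖ * Real.sqrt ((1 - rr p)⁻¹ * rr p ^ n) := by
  apply ContinuousLinearMap.opNorm_le_bound
  · exact mul_nonneg (norm_nonneg _) (Real.sqrt_nonneg _)
  intro x
  have h1 := diff_sq_le hp ht hρ hA n x
  have hs : (0:ℝ) ≤ (1 - rr p)⁻¹ * rr p ^ n := by
    have h1r : (0:ℝ) ≤ 1 - rr p := by linarith [rr_lt_one hp]
    exact mul_nonneg (inv_nonneg.mpr h1r) (pow_nonneg (le_of_lt (rr_pos hp)) n)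
  have h2 := Real.sqrt_le_sqrt h1
  rw [Real.sqrt_sq (norm_nonneg _)] at h2
  have hshow : ((A - FnT A n) x) = A x - FnT A n x := rfl
  rw [hshow]
  refine le_trans h2 ?_
  rw [Real.sqrt_mul (sq_nonneg _), Real.sqrt_sq (mul_nonneg (norm_nonneg _) (norm_nonneg _))]
  ring_nf
  apply le_of_eq
  ring

lemma Acompact : IsCompactOperator ⇑A := by
  have hr0 := rr_pos hp
  have hr1 := rr_lt_one hp
  apply isCompactOperator_of_tendsto (l := atTop) (F := fun n => FnT A n)
  · rw [tendsto_iff_norm_sub_tendsto_zero]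
    apply squeeze_zero (fun n => norm_nonneg _)
      (g := fun n => ‖Rgeom hp‖ * Real.sqrt ((1 - rr p)⁻¹ * rr p ^ n))
    · intro n
      rw [norm_sub_rev]
      exact opnorm_diff_le hp ht hρ hA n
    · have hu : Tendsto (fun n : ℕ => (1 - rr p)⁻¹ * rr p ^ n) atTop (𝓝 0) := by
        have := (tendsto_pow_atTop_nhds_zero_of_lt_one (le_of_lt hr0) hr1).const_mul ((1 - rr p)⁻¹)
        simpa using this
      have := ((Real.continuous_sqrt.tendsto 0).comp hu).const_mul ‖Rgeom hp‖
      simpa using this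
  · exact Eventually.of_forall (fun n => FnT_compact A n)
end climit
section eigen
open Filter Topology Metric

/-- The quadratic form of `A`. -/
noncomputable def Qf (A : E2 →L[ℝ] E2) (x : E2) : ℝ := (inner ℝ x (A x) : ℝ)

variable {A : E2 →L[ℝ] E2}
  (hsym : ∀ x y : E2, (inner ℝ (A x) y : ℝ) = inner ℝ x (A y))
  (hcomp : IsCompactOperator ⇑A)

lemma exists_unit : ∃ x : E2, ‖x‖ = 1 := by
  have hmem : Memℓp (fun k : ℕ => if k = 0 then (1:ℝ) else 0) 2 := by
    rw [memℓp_gen_iff (p := 2) (by norm_num)]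
    apply summable_of_ne_finset_zero (s := {0})
    intro k hk
    simp only [Finset.mem_singleton] at hk
    simp [hk]
  refine ⟨⟨fun k : ℕ => if k = 0 then (1:ℝ) else 0, hmem⟩, ?_⟩
  set e0 : E2 := ⟨fun k : ℕ => if k = 0 then (1:ℝ) else 0, hmem⟩ with he0
  have h : ‖e0‖^2 = 1 := by
    rw [norm_sq_eq]
    have hc : ∀ k : ℕ, (e0 : ℕ → ℝ) k ^ 2 = if k = 0 then 1 else 0 := by
      intro k
      show (if k = 0 then (1:ℝ) else 0)^2 = _
      split <;> norm_num
    rw [tsum_congr hc, tsum_ite_eq]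
  have h2 := congrArg Real.sqrt h
  rwa [Real.sqrt_sq (norm_nonneg _), Real.sqrt_one] at h2

include hsym in
lemma quad_expand (m : ℝ) (x y : E2) (s : ℝ) :
    Qf A (x + s • y) - m * ‖x + s • y‖^2
      = (Qf A y - m * ‖y‖^2) * (s * s) + (2 * ((inner ℝ x (A y) : ℝ) - m * inner ℝ x y)) * s
        + (Qf A x - m * ‖x‖^2) := by
  have hyx : (inner ℝ y (A x) : ℝ) = inner ℝ x (A y) := by
    rw [real_inner_comm, hsym]
  have hxy : (inner ℝ y x : ℝ) = inner ℝ x y := real_inner_comm _ _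
  simp only [Qf, map_add, map_smul, inner_add_left, inner_add_right, real_inner_smul_left,
    real_inner_smul_right, ← real_inner_self_eq_norm_sq]
  rw [hyx, hxy]
  ring

include hsym in
lemma cs_ineq (m : ℝ) (hlow : ∀ x : E2, m * ‖x‖^2 ≤ Qf A x) (x y : E2) :
    ((inner ℝ x (A y) : ℝ) - m * inner ℝ x y)^2
      ≤ (Qf A x - m * ‖x‖^2) * (Qf A y - m * ‖y‖^2) := by
  have hquad : ∀ s : ℝ, 0 ≤ (Qf A y - m * ‖y‖^2) * (s * s)
      + (2 * ((inner ℝ x (A y) : ℝ) - m * inner ℝ x y)) * s + (Qf A x - m * ‖x‖^2) := by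
    intro s
    rw [← quad_expand hsym m x y s]
    have := hlow (x + s • y)
    linarith
  have := discrim_le_zero hquad
  rw [discrim] at this
  nlinarith [this]

include hsym in
lemma pvec_norm_le (m : ℝ) (hlow : ∀ x : E2, m * ‖x‖^2 ≤ Qf A x) (x : E2) :
    ‖A x - m • x‖^2 ≤ (‖A‖ + |m|) * (Qf A x - m * ‖x‖^2) := by
  set Px := A x - m • x with hPx
  have hB : ∀ u v : E2, (inner ℝ u (A v) : ℝ) - m * inner ℝ u v = inner ℝ u (A v - m • v) := by
    intro u v
    rw [inner_sub_right, real_inner_smul_right]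
  have hK : (0:ℝ) ≤ ‖A‖ + |m| := add_nonneg (norm_nonneg _) (abs_nonneg _)
  have h1 : ((inner ℝ Px (A x) : ℝ) - m * inner ℝ Px x)^2
      ≤ (Qf A Px - m * ‖Px‖^2) * (Qf A x - m * ‖x‖^2) := cs_ineq hsym m hlow Px x
  have h2 : (inner ℝ Px (A x) : ℝ) - m * inner ℝ Px x = ‖Px‖^2 := by
    rw [hB, ← hPx, real_inner_self_eq_norm_sq]
  have h3 : Qf A Px - m * ‖Px‖^2 ≤ (‖A‖ + |m|) * ‖Px‖^2 := by
    have h4 : Qf A Px - m * ‖Px‖^2 = inner ℝ Px (A Px - m • Px) := by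
      rw [← hB]
      simp only [Qf, real_inner_self_eq_norm_sq]
    rw [h4]
    calc (inner ℝ Px (A Px - m • Px) : ℝ) ≤ ‖Px‖ * ‖A Px - m • Px‖ := real_inner_le_norm _ _
      _ ≤ ‖Px‖ * (‖A‖ * ‖Px‖ + |m| * ‖Px‖) := by
          apply mul_le_mul_of_nonneg_left _ (norm_nonneg _)
          refine le_trans (norm_sub_le _ _) ?_
          gcongr
          · exact A.le_opNorm Px
          · rw [norm_smul, Real.norm_eq_abs]
      _ = (‖A‖ + |m|) * ‖Px‖^2 := by ring
  have hq0 : 0 ≤ Qf A x - m * ‖x‖^2 := by linarith [hlow x]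
  have hq0' : 0 ≤ Qf A Px - m * ‖Px‖^2 := by linarith [hlow Px]
  by_cases hz : ‖Px‖ = 0
  · rw [hz]
    rw [show ((0:ℝ))^2 = 0 by norm_num]
    exact mul_nonneg hK hq0
  · have hzpos0 : 0 < ‖Px‖ := lt_of_le_of_ne (norm_nonneg _) (Ne.symm hz)
    have hzpos : 0 < ‖Px‖^2 := by positivity
    rw [h2] at h1
    nlinarith [h1, h3, hq0]

include hsym hcomp in
lemma bottom_eigenvalue (c : ℝ) (hc : 0 < c) (x0 : E2) (hx0 : x0 ≠ 0)
    (hq : Qf A x0 ≤ -c * ‖x0‖^2) :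
    ∃ ν : ℝ, c ≤ ν ∧ Module.End.HasEigenvalue (↑A : E2 →ₗ[ℝ] E2) (-ν) := by
  classical
  set S : Set ℝ := Qf A '' {x : E2 | ‖x‖ = 1} with hS
  have hbdd : BddBelow S := by
    refine ⟨-‖A‖, fun y hy => ?_⟩
    obtain ⟨x, hx, rfl⟩ := hy
    have h1 : |(inner ℝ x (A x) : ℝ)| ≤ ‖x‖ * ‖A x‖ := abs_real_inner_le_norm _ _
    have h2 : ‖A x‖ ≤ ‖A‖ * ‖x‖ := A.le_opNorm x
    rw [Set.mem_setOf_eq] at hx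
    rw [hx, one_mul] at h1
    rw [hx, mul_one] at h2
    have h5 := abs_le.mp (le_trans h1 h2)
    exact h5.1
  have hne : S.Nonempty := by
    obtain ⟨x, hx⟩ := exists_unit
    exact ⟨Qf A x, ⟨x, hx, rfl⟩⟩
  set m := sInf S with hm
  -- scaling of the quadratic form
  have hscale : ∀ (a : ℝ) (x : E2), Qf A (a • x) = a^2 * Qf A x := by
    intro a x
    simp only [Qf, map_smul, real_inner_smul_left, real_inner_smul_right]
    ring
  have hmem : ∀ x : E2, x ≠ 0 → Qf A (‖x‖⁻¹ • x) ∈ S := by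
    intro x hx
    exact ⟨‖x‖⁻¹ • x, norm_smul_inv_norm hx, rfl⟩
  have hlow : ∀ x : E2, m * ‖x‖^2 ≤ Qf A x := by
    intro x
    by_cases hx : x = 0
    · simp [hx, Qf]
    · have h1 : m ≤ Qf A (‖x‖⁻¹ • x) := csInf_le hbdd (hmem x hx)
      have h2 : Qf A (‖x‖⁻¹ • x) = (‖x‖⁻¹)^2 * Qf A x := hscale _ _
      have hxn : (0:ℝ) < ‖x‖ := norm_pos_iff.mpr hx
      rw [h2] at h1
      have h3 := mul_le_mul_of_nonneg_left h1 (le_of_lt (mul_pos hxn hxn))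
      calc m * ‖x‖^2 = ‖x‖ * ‖x‖ * m := by ring
        _ ≤ ‖x‖ * ‖x‖ * ((‖x‖⁻¹)^2 * Qf A x) := h3
        _ = Qf A x := by
            have hne' : ‖x‖ ≠ 0 := ne_of_gt hxn
            field_simp
  have hmc : m ≤ -c := by
    have h1 : m ≤ Qf A (‖x0‖⁻¹ • x0) := csInf_le hbdd (hmem x0 hx0)
    have hxn : (0:ℝ) < ‖x0‖ := norm_pos_iff.mpr hx0
    have hne' : ‖x0‖ ≠ 0 := ne_of_gt hxn
    rw [hscale] at h1
    refine le_trans h1 ?_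
    have h2 := mul_le_mul_of_nonneg_left hq (le_of_lt (pow_pos (inv_pos.mpr hxn) 2))
    refine le_trans h2 (le_of_eq ?_)
    field_simp
  have hmneg : m < 0 := lt_of_le_of_lt hmc (by linarith)
  have hmne : m ≠ 0 := ne_of_lt hmneg
  -- minimizing sequence
  have hseq : ∀ n : ℕ, ∃ x : E2, ‖x‖ = 1 ∧ Qf A x < m + 1/(n+1) := by
    intro n
    have h1 : m < m + 1/(n+1) := by
      have : (0:ℝ) < 1/(n+1) := by positivity
      linarith
    obtain ⟨y, hyS, hy⟩ := (csInf_lt_iff hbdd hne).mp h1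
    obtain ⟨x, hx, rfl⟩ := hyS
    exact ⟨x, hx, hy⟩
  choose xs hxs1 hxs2 using hseq
  set en : ℕ → ℝ := fun n => Qf A (xs n) - m with hen
  have hen0 : ∀ n, 0 ≤ en n := by
    intro n
    have h1 := hlow (xs n)
    rw [hxs1 n] at h1
    rw [one_pow, mul_one] at h1
    exact sub_nonneg.mpr h1
  have henlim : Tendsto en atTop (𝓝 0) := by
    apply squeeze_zero hen0 (g := fun n : ℕ => 1/(n+1))
    · intro n
      have := hxs2 n
      simp only [hen]
      linarith
    · exact tendsto_one_div_add_atTop_nhds_zero_nat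
  -- P xs n → 0
  have hPlim : Tendsto (fun n => A (xs n) - m • xs n) atTop (𝓝 0) := by
    rw [tendsto_zero_iff_norm_tendsto_zero]
    apply squeeze_zero (fun n => norm_nonneg _)
      (g := fun n => Real.sqrt ((‖A‖ + |m|) * en n))
    · intro n
      have h1 := pvec_norm_le hsym m hlow (xs n)
      rw [hxs1 n] at h1
      rw [one_pow, mul_one] at h1
      have h2 : ‖A (xs n) - m • xs n‖^2 ≤ (‖A‖ + |m|) * en n := h1
      have h3 := Real.sqrt_le_sqrt h2
      rwa [Real.sqrt_sq (norm_nonneg _)] at h3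
    · have h4 := henlim.const_mul (‖A‖ + |m|)
      rw [mul_zero] at h4
      have h5 := (Real.continuous_sqrt.tendsto 0).comp h4
      simpa only [Function.comp_def, Real.sqrt_zero] using h5
  -- compactness: extract convergent subsequence of A (xs n)
  obtain ⟨K, hKc, hKn⟩ := hcomp
  obtain ⟨ε, hε, hball⟩ := Metric.mem_nhds_iff.mp hKn
  have hmemK : ∀ n, (ε/2) • A (xs n) ∈ K := by
    intro n
    have h1 : (ε/2) • xs n ∈ Metric.ball (0:E2) ε := by
      rw [mem_ball, dist_zero_right, norm_smul, hxs1 n, mul_one, Real.norm_eq_abs,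
        abs_of_pos (half_pos hε)]
      linarith
    have h2 := hball h1
    rw [Set.mem_preimage, map_smul] at h2
    exact h2
  obtain ⟨y, _, φ, hφ, hylim⟩ := hKc.tendsto_subseq hmemK
  have hzlim : Tendsto (fun n => A (xs (φ n))) atTop (𝓝 ((ε/2)⁻¹ • y)) := by
    have h1 : Tendsto (fun n => (ε/2)⁻¹ • ((ε/2) • A (xs (φ n)))) atTop (𝓝 ((ε/2)⁻¹ • y)) :=
      hylim.const_smul _
    have h2 : ∀ n, (ε/2)⁻¹ • ((ε/2) • A (xs (φ n))) = A (xs (φ n)) := by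
      intro n
      rw [smul_smul, inv_mul_cancel₀ (by linarith), one_smul]
    exact Filter.Tendsto.congr h2 h1
  set z := (ε/2)⁻¹ • y with hz
  have hPφ : Tendsto (fun n => A (xs (φ n)) - m • xs (φ n)) atTop (𝓝 0) :=
    hPlim.comp hφ.tendsto_atTop
  have hxslim : Tendsto (fun n => xs (φ n)) atTop (𝓝 (m⁻¹ • z)) := by
    have h1 : Tendsto (fun n => A (xs (φ n)) - (A (xs (φ n)) - m • xs (φ n))) atTop
        (𝓝 (z - 0)) := hzlim.sub hPφ
    have h2 : ∀ n, A (xs (φ n)) - (A (xs (φ n)) - m • xs (φ n)) = m • xs (φ n) := by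
      intro n; abel
    rw [sub_zero] at h1
    have h3 : Tendsto (fun n => m⁻¹ • (m • xs (φ n))) atTop (𝓝 (m⁻¹ • z)) := by
      apply Tendsto.const_smul _ _
      simpa [h2] using h1
    have h4 : ∀ n, m⁻¹ • (m • xs (φ n)) = xs (φ n) := by
      intro n; rw [smul_smul, inv_mul_cancel₀ hmne, one_smul]
    simpa [h4] using h3
  set v := m⁻¹ • z with hv
  have hAv : A v = z := by
    have h1 : Tendsto (fun n => A (xs (φ n))) atTop (𝓝 (A v)) :=
      (A.continuous.tendsto v).comp hxslim
    exact tendsto_nhds_unique h1 hzlim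
  have hmv : m • v = z := by
    rw [hv, smul_smul, mul_inv_cancel₀ hmne, one_smul]
  have hvnorm : ‖v‖ = 1 := by
    have h1 : Tendsto (fun n => ‖xs (φ n)‖) atTop (𝓝 ‖v‖) :=
      (continuous_norm.tendsto v).comp hxslim
    have h2 : Tendsto (fun n => ‖xs (φ n)‖) atTop (𝓝 1) := by
      have : ∀ n, ‖xs (φ n)‖ = 1 := fun n => hxs1 (φ n)
      have hc1 : Tendsto (fun _ : ℕ => (1:ℝ)) atTop (𝓝 1) := tendsto_const_nhds
      simpa [this] using hc1
    exact tendsto_nhds_unique h1 h2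
  have hvne : v ≠ 0 := by
    intro h
    rw [h, norm_zero] at hvnorm
    exact one_ne_zero hvnorm.symm
  refine ⟨-m, by linarith, ?_⟩
  rw [neg_neg]
  apply Module.End.hasEigenvalue_of_hasEigenvector (x := v)
  constructor
  · rw [Module.End.mem_eigenspace_iff]
    show A v = m • v
    rw [hAv, hmv]
  · exact hvne
end eigen
section eigdim
open Module Module.End Metric

variable {A : E2 →L[ℝ] E2}
  (hsym : ∀ x y : E2, (inner ℝ (A x) y : ℝ) = inner ℝ x (A y))
  (hcomp : IsCompactOperator ⇑A)

include hcomp in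
lemma eig_findim (νm : ℝ) (hν : νm ≠ 0) :
    FiniteDimensional ℝ (Module.End.eigenspace (↑A : E2 →ₗ[ℝ] E2) νm) := by
  set V := Module.End.eigenspace (↑A : E2 →ₗ[ℝ] E2) νm with hV
  have hmaps : ∀ v ∈ V, (↑A : E2 →ₗ[ℝ] E2) v ∈ V := by
    intro v hv
    rw [hV, Module.End.mem_eigenspace_iff] at hv ⊢
    rw [hv, map_smul, hv]
  have hclosed : IsClosed (V : Set E2) := by
    have : (V : Set E2) = {x : E2 | A x = νm • x} := by
      ext x
      simp only [SetLike.mem_coe, hV, Module.End.mem_eigenspace_iff]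
      rfl
    rw [this]
    exact isClosed_eq A.continuous (continuous_const_smul νm)
  haveI : CompleteSpace ↥V := hclosed.completeSpace_coe
  have hcomp' : IsCompactOperator ⇑(↑A : E2 →ₗ[ℝ] E2) := by
    rwa [ContinuousLinearMap.coe_coe]
  have hres := hcomp'.restrict' (V := V) hmaps
  have hres_eq : ⇑((↑A : E2 →ₗ[ℝ] E2).restrict hmaps) = fun v : ↥V => νm • v := by
    funext v
    apply Subtype.ext
    show (↑A : E2 →ₗ[ℝ] E2) ↑v = νm • (v : E2)
    exact Module.End.mem_eigenspace_iff.mp v.2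
  rw [hres_eq] at hres
  have hid : IsCompactOperator (fun v : ↥V => v) := by
    have h2 := hres.smul νm⁻¹
    have h3 : (νm⁻¹ • fun v : ↥V => νm • v) = fun v : ↥V => v := by
      funext v
      show νm⁻¹ • νm • v = v
      rw [smul_smul, inv_mul_cancel₀ hν, one_smul]
    rwa [h3] at h2
  obtain ⟨K, hKc, hKn⟩ := hid
  rw [Set.preimage_id'] at hKn
  obtain ⟨ε, hε, hball⟩ := Metric.mem_nhds_iff.mp hKn
  have hsub : closedBall (0 : ↥V) (ε/2) ⊆ K :=
    le_trans (closedBall_subset_ball (by linarith)) hball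
  have hcb : IsCompact (closedBall (0 : ↥V) (ε/2)) :=
    hKc.of_isClosed_subset Metric.isClosed_closedBall hsub
  exact FiniteDimensional.of_isCompact_closedBall₀ ℝ (half_pos hε) hcb

variable (A) in
/-- eigenspace of `A` for eigenvalue `-ν` -/
noncomputable def Eig (ν : ℝ) : Submodule ℝ E2 :=
  Module.End.eigenspace (↑A : E2 →ₗ[ℝ] E2) (-ν)

include hsym in
lemma hsymL : LinearMap.IsSymmetric (↑A : E2 →ₗ[ℝ] E2) := by
  intro x y
  exact hsym x y

include hsym in
lemma orth_sup (s : Finset ℝ) (a : ℝ) (ha : ∀ ν ∈ s, ν ≠ a) (y : E2) (hy : y ∈ Eig A a) :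
    ∀ z ∈ s.sup (Eig A), (inner ℝ y z : ℝ) = 0 := by
  classical
  induction s using Finset.cons_induction with
  | empty =>
      intro z hz
      rw [Finset.sup_empty, Submodule.mem_bot] at hz
      rw [hz, inner_zero_right]
  | cons b s hb ih =>
      intro z hz
      rw [Finset.sup_cons] at hz
      obtain ⟨u, hu, w, hw, rfl⟩ := Submodule.mem_sup.mp hz
      have h1 : (inner ℝ y u : ℝ) = 0 := by
        have hba : b ≠ a := ha b (Finset.mem_cons_self _ _)
        have hne : (-a) ≠ (-b) := fun h => hba (by linarith [neg_injective h])
        have := (hsymL hsym).orthogonalFamily_eigenspaces hne ⟨y, hy⟩ ⟨u, hu⟩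
        simpa using this
      have h2 : (inner ℝ y w : ℝ) = 0 :=
        ih (fun ν hν => ha ν (Finset.mem_cons_of_mem hν)) w hw
      rw [inner_add_right, h1, h2, add_zero]

lemma Asup_mem (s : Finset ℝ) : ∀ z ∈ s.sup (Eig A), A z ∈ s.sup (Eig A) := by
  classical
  induction s using Finset.cons_induction with
  | empty =>
      intro z hz
      rw [Finset.sup_empty, Submodule.mem_bot] at hz
      rw [hz, map_zero]
      exact Submodule.zero_mem _
  | cons b s hb ih =>
      intro z hz
      rw [Finset.sup_cons] at hz ⊢
      obtain ⟨u, hu, w, hw, rfl⟩ := Submodule.mem_sup.mp hz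
      rw [map_add]
      apply Submodule.add_mem
      · apply Submodule.mem_sup_left
        have hu' := hu
        rw [Eig, Module.End.mem_eigenspace_iff] at hu'
        have : A u = (-b) • u := hu'
        rw [show A u = (-b) • u from hu']
        exact Submodule.smul_mem _ _ hu
      · exact Submodule.mem_sup_right (ih w hw)

include hsym in
lemma form_le_on_sup (s : Finset ℝ) (c : ℝ) (hs : ∀ ν ∈ s, c ≤ ν) :
    ∀ x ∈ s.sup (Eig A), Qf A x ≤ -c * ‖x‖^2 := by
  classical
  induction s using Finset.cons_induction with
  | empty =>
      intro x hx
      rw [Finset.sup_empty, Submodule.mem_bot] at hx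
      rw [hx]
      simp [Qf]
  | cons b s hb ih =>
      intro x hx
      rw [Finset.sup_cons] at hx
      obtain ⟨u, hu, w, hw, rfl⟩ := Submodule.mem_sup.mp hx
      have hbne : ∀ ν ∈ s, ν ≠ b := fun ν hν h => hb (h ▸ hν)
      have hau : A u = (-b) • u := by
        have := hu; rwa [Eig, Module.End.mem_eigenspace_iff] at this
      have huw : (inner ℝ u w : ℝ) = 0 := orth_sup hsym s b hbne u hu w hw
      have huAw : (inner ℝ u (A w) : ℝ) = 0 :=
        orth_sup hsym s b hbne u hu (A w) (Asup_mem s w hw)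
      have hwAu : (inner ℝ w (A u) : ℝ) = 0 := by
        rw [hau, real_inner_smul_right, real_inner_comm, huw, mul_zero]
      have hQu : (inner ℝ u (A u) : ℝ) = -b * ‖u‖^2 := by
        rw [hau, real_inner_smul_right, real_inner_self_eq_norm_sq]
      have hQw : Qf A w ≤ -c * ‖w‖^2 := ih (fun ν hν => hs ν (Finset.mem_cons_of_mem hν)) w hw
      have hcb : c ≤ b := hs b (Finset.mem_cons_self _ _)
      have hexp : Qf A (u + w) = -b * ‖u‖^2 + Qf A w := by
        simp only [Qf, map_add, inner_add_left, inner_add_right]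
        rw [hQu, huAw, hwAu]
        ring
      have hnorm : ‖u + w‖^2 = ‖u‖^2 + ‖w‖^2 := by
        have hwu : (inner ℝ w u : ℝ) = 0 := by rw [real_inner_comm]; exact huw
        rw [← real_inner_self_eq_norm_sq, inner_add_left, inner_add_right, inner_add_right,
          ← real_inner_self_eq_norm_sq, ← real_inner_self_eq_norm_sq, huw, hwu]
        ring
      rw [hexp, hnorm]
      have h1 : -b * ‖u‖^2 ≤ -c * ‖u‖^2 := by
        apply mul_le_mul_of_nonneg_right _ (sq_nonneg _)
        linarith
      linarith

include hsym in
lemma disj_sup (s : Finset ℝ) (b : ℝ) (hb : b ∉ s) : Disjoint (Eig A b) (s.sup (Eig A)) := by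
  rw [Submodule.disjoint_def]
  intro y hy1 hy2
  have h0 : (inner ℝ y y : ℝ) = 0 :=
    orth_sup hsym s b (fun ν hν h => hb (h ▸ hν)) y hy1 y hy2
  exact inner_self_eq_zero.mp h0

include hsym in
lemma findim_sup (s : Finset ℝ) (hfd : ∀ ν ∈ s, FiniteDimensional ℝ (Eig A ν)) :
    FiniteDimensional ℝ ↥(s.sup (Eig A)) ∧
      ∑ ν ∈ s, finrank ℝ (Eig A ν) ≤ finrank ℝ ↥(s.sup (Eig A)) := by
  classical
  induction s using Finset.cons_induction with
  | empty =>
      constructor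
      · rw [Finset.sup_empty]
        infer_instance
      · simp
  | cons b s hb ih =>
      have hfd' : ∀ ν ∈ s, FiniteDimensional ℝ (Eig A ν) :=
        fun ν hν => hfd ν (Finset.mem_cons_of_mem hν)
      obtain ⟨ihfd, ihsum⟩ := ih hfd'
      haveI := hfd b (Finset.mem_cons_self _ _)
      haveI := ihfd
      rw [Finset.sup_cons]
      haveI hsupfd : FiniteDimensional ℝ ↥(Eig A b ⊔ s.sup (Eig A)) := inferInstance
      refine ⟨hsupfd, ?_⟩
      have heq := Submodule.finrank_sup_add_finrank_inf_eq (Eig A b) (s.sup (Eig A))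
      have hinf : Eig A b ⊓ s.sup (Eig A) = ⊥ :=
        disjoint_iff.mp (disj_sup hsym s b hb)
      rw [hinf, finrank_bot] at heq
      rw [Finset.sum_cons]
      omega
end eigdim
section shift
open Module

lemma shift_memℓp (x : E2) : Memℓp (fun j : ℕ => (x : ℕ → ℝ) (j+1)) 2 := by
  rw [memℓp_gen_iff (p := 2) (by norm_num)]
  have h := lp.memℓp x
  rw [memℓp_gen_iff (p := 2) (by norm_num)] at h
  exact h.comp_injective (add_left_injective 1)

/-- the left shift on `ℓ²` -/
noncomputable def shiftL : E2 →ₗ[ℝ] E2 where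
  toFun x := ⟨fun j => x (j+1), shift_memℓp x⟩
  map_add' x y := by
    apply Subtype.ext
    funext j
    show ((x + y : E2) : ℕ → ℝ) (j+1) = _
    rw [lp.coeFn_add]
    rfl
  map_smul' c x := by
    apply Subtype.ext
    funext j
    show ((c • x : E2) : ℕ → ℝ) (j+1) = _
    rw [lp.coeFn_smul]
    rfl

@[simp] lemma shiftL_apply (x : E2) (j : ℕ) : (shiftL x : ℕ → ℝ) j = x (j+1) := rfl

lemma shift_norm (y : E2) (hy0 : (y : ℕ → ℝ) 0 = 0) : ‖shiftL y‖ = ‖y‖ := by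
  have h1 : ‖shiftL y‖^2 = ‖y‖^2 := by
    rw [norm_sq_eq, norm_sq_eq]
    rw [Summable.tsum_eq_zero_add (sq_summable y)]
    rw [hy0]
    norm_num
  have h2 := congrArg Real.sqrt h1
  rwa [Real.sqrt_sq (norm_nonneg _), Real.sqrt_sq (norm_nonneg _)] at h2

variable {p t ρ : ℝ} (hp : 1 < p) (ht : 0 < t) (hρ : t + 1 < ρ)
  {A : E2 →L[ℝ] E2}
  (hA : ∀ (x : E2) (j : ℕ), (A x : ℕ → ℝ) j = ∑' k : ℕ, Ep p t ρ j k * (x : ℕ → ℝ) k)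

include hp ht hρ hA

lemma Ashift (y : E2) (hy0 : (y : ℕ → ℝ) 0 = 0) (j : ℕ) :
    (A (shiftL y) : ℕ → ℝ) j = p ^ ρ * (A y : ℕ → ℝ) (j+1) := by
  have h0 : (0:ℝ) < p := lt_trans one_pos hp
  have h1 : (A y : ℕ → ℝ) (j+1) = p ^ (-ρ) * (A (shiftL y) : ℕ → ℝ) j := by
    rw [hA y (j+1), Summable.tsum_eq_zero_add (row_summable hp ht hρ y (j+1)), hy0, mul_zero, zero_add]
    rw [hA (shiftL y) j, ← tsum_mul_left]
    congr 1
    funext k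
    rw [ep_shift hp (j := j) (k := k), shiftL_apply]
    ring
  rw [h1, ← mul_assoc, ← Real.rpow_add h0]
  norm_num

lemma shift_Q (y : E2) (hy0 : (y : ℕ → ℝ) 0 = 0) : Qf A (shiftL y) = p ^ ρ * Qf A y := by
  have hsum : Summable fun j => (y : ℕ → ℝ) j * (A y : ℕ → ℝ) j := by
    have h := lp.summable_inner (𝕜 := ℝ) y (A y)
    exact h.congr (fun j => by simp [RCLike.inner_apply, mul_comm])
  have hQy : Qf A y = ∑' j, (y : ℕ → ℝ) (j+1) * (A y : ℕ → ℝ) (j+1) := by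
    rw [Qf, inner_eq_tsum', Summable.tsum_eq_zero_add hsum, hy0, zero_mul, zero_add]
  rw [Qf, inner_eq_tsum']
  calc ∑' j, (shiftL y : ℕ → ℝ) j * (A (shiftL y) : ℕ → ℝ) j
      = ∑' j, p ^ ρ * ((y : ℕ → ℝ) (j+1) * (A y : ℕ → ℝ) (j+1)) := by
        apply tsum_congr
        intro j
        rw [shiftL_apply, Ashift hp ht hρ hA y hy0 j]
        ring
    _ = p ^ ρ * ∑' j, (y : ℕ → ℝ) (j+1) * (A y : ℕ → ℝ) (j+1) := tsum_mul_left
    _ = p ^ ρ * Qf A y := by rw [hQy]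

lemma shrink_step (c : ℝ) (V : Submodule ℝ E2) (hfd : FiniteDimensional ℝ V)
    (hV : ∀ x ∈ V, Qf A x ≤ -c * ‖x‖^2) :
    ∃ W : Submodule ℝ E2, FiniteDimensional ℝ W ∧ finrank ℝ V ≤ finrank ℝ W + 1 ∧
      ∀ x ∈ W, Qf A x ≤ -(p ^ ρ * c) * ‖x‖^2 := by
  classical
  haveI := hfd
  set φ : ↥V →ₗ[ℝ] ℝ := ((evCLM 0 : E2 →L[ℝ] ℝ) : E2 →ₗ[ℝ] ℝ).domRestrict V with hφ
  set N : Submodule ℝ ↥V := LinearMap.ker φ with hN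
  set L : ↥N →ₗ[ℝ] E2 := shiftL ∘ₗ (V.subtype ∘ₗ N.subtype) with hL
  have hLinj : Function.Injective L := by
    intro v w hvw
    have hdiff : L (v - w) = 0 := by rw [map_sub, hvw, sub_self]
    have hz : v - w = 0 := by
      set u := v - w with hu
      have hu0 : ((u : ↥V) : E2) = 0 → u = 0 := by
        intro h
        apply Subtype.ext
        apply Subtype.ext
        exact h
      apply hu0
      have hker : φ (u : ↥V) = 0 := u.2
      have hc0 : (((u : ↥V) : E2) : ℕ → ℝ) 0 = 0 := hker
      have hcs : ∀ j, (((u : ↥V) : E2) : ℕ → ℝ) (j+1) = 0 := by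
        intro j
        have : (shiftL ((u : ↥V) : E2) : ℕ → ℝ) j = 0 := by
          have hL0 : shiftL ((u : ↥V) : E2) = 0 := hdiff
          rw [hL0]
          exact congrFun (lp.coeFn_zero (E := fun _ : ℕ => ℝ) (p := 2)) j
        rwa [shiftL_apply] at this
      apply Subtype.ext
      funext j
      cases j with
      | zero => exact hc0
      | succ n => exact hcs n
    rw [sub_eq_zero] at hz
    exact hz
  refine ⟨LinearMap.range L, inferInstance, ?_, ?_⟩
  · have h1 : finrank ℝ ↥(LinearMap.range L) = finrank ℝ ↥N :=
      LinearMap.finrank_range_of_inj hLinj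
    have h2 : finrank ℝ ↥(LinearMap.range φ) + finrank ℝ ↥N = finrank ℝ ↥V :=
      LinearMap.finrank_range_add_finrank_ker φ
    have h3 : finrank ℝ ↥(LinearMap.range φ) ≤ 1 := by
      have := Submodule.finrank_le (LinearMap.range φ)
      simpa using this
    omega
  · rintro x ⟨v, rfl⟩
    set y : E2 := ((v : ↥V) : E2) with hy
    have hy0 : (y : ℕ → ℝ) 0 = 0 := v.2
    have hyV : y ∈ V := (v : ↥V).2
    have hLv : L v = shiftL y := rfl
    rw [hLv, shift_Q hp ht hρ hA y hy0, shift_norm y hy0]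
    have h1 : Qf A y ≤ -c * ‖y‖^2 := hV y hyV
    have h2 : (0:ℝ) < p ^ ρ := Real.rpow_pos_of_pos (lt_trans one_pos hp) ρ
    nlinarith [h1, h2]

lemma descend : ∀ (n : ℕ) (c : ℝ) (V : Submodule ℝ E2), FiniteDimensional ℝ V →
    (∀ x ∈ V, Qf A x ≤ -c * ‖x‖^2) → n + 1 ≤ finrank ℝ V →
    ∃ x : E2, x ≠ 0 ∧ Qf A x ≤ -(p ^ (ρ * (n:ℝ)) * c) * ‖x‖^2 := by
  intro n
  induction n with
  | zero =>
      intro c V hfd hV hrank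
      haveI := hfd
      have hVne : V ≠ ⊥ := by
        intro h
        rw [h, finrank_bot] at hrank
        omega
      obtain ⟨x, hxV, hxne⟩ := Submodule.exists_mem_ne_zero_of_ne_bot hVne
      refine ⟨x, hxne, ?_⟩
      have := hV x hxV
      rw [show ρ * ((0:ℕ):ℝ) = 0 by norm_num, Real.rpow_zero, one_mul]
      exact this
  | succ n ih =>
      intro c V hfd hV hrank
      obtain ⟨W, hWfd, hWrank, hWQ⟩ := shrink_step hp ht hρ hA c V hfd hV
      have hrank' : n + 1 ≤ finrank ℝ W := by omega
      obtain ⟨x, hxne, hxQ⟩ := ih (p ^ ρ * c) W hWfd hWQ hrank'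
      refine ⟨x, hxne, ?_⟩
      have heq : p ^ (ρ * (n:ℝ)) * (p ^ ρ * c) = p ^ (ρ * ((n+1:ℕ):ℝ)) * c := by
        have h0 : (0:ℝ) < p := lt_trans one_pos hp
        rw [← mul_assoc, ← Real.rpow_add h0]
        push_cast
        ring_nf
      rwa [heq] at hxQ
end shift
end
/-- If `μ : ℕ → ℝ` lists the absolute values of the negative eigenvalues of `E_p` in
non-increasing order with multiplicities, then `λ_k⁻(E_p) ≤ p^(-ρk) λ₀⁻(E_p)` for `k ≥ 1`. -/
theorem Ep_negative_eigenvalue_decay (p t ρ : ℝ) (hp : 1 < p) (ht : 0 < t) (hρ : t + 1 < ρ)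
    (A : lp (fun _ : ℕ => ℝ) 2 →L[ℝ] lp (fun _ : ℕ => ℝ) 2)
    (hA : ∀ (x : lp (fun _ : ℕ => ℝ) 2) (j : ℕ),
      (A x : ℕ → ℝ) j = ∑' k : ℕ, Ep p t ρ j k * (x : ℕ → ℝ) k)
    (μ : ℕ → ℝ) (hmono : Antitone μ) (hpos : ∀ k, 0 < μ k)
    (henum : ∀ ν : ℝ, 0 < ν →
      (Module.End.HasEigenvalue
        (A : lp (fun _ : ℕ => ℝ) 2 →ₗ[ℝ] lp (fun _ : ℕ => ℝ) 2) (-ν) ↔ ∃ k, μ k = ν))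
    (hmult : ∀ ν : ℝ, 0 < ν →
      Nat.card {k : ℕ | μ k = ν}
        = Module.finrank ℝ
            (Module.End.eigenspace
              (A : lp (fun _ : ℕ => ℝ) 2 →ₗ[ℝ] lp (fun _ : ℕ => ℝ) 2) (-ν))) :
    ∀ k : ℕ, 1 ≤ k → μ k ≤ p ^ (-(ρ * k)) * μ 0 := by
  classical
  intro k hk
  by_contra hcon
  push_neg at hcon
  have hp0 : (0:ℝ) < p := lt_trans one_pos hp
  have hsym := symmA hp ht hρ hA
  have hcomp := Acompact hp ht hρ hA
  set s : Finset ℝ := (Finset.range (k+1)).image μ with hs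
  have hsc : ∀ ν ∈ s, μ k ≤ ν := by
    intro ν hν
    obtain ⟨j, hj, rfl⟩ := Finset.mem_image.mp hν
    exact hmono (by simpa using Nat.lt_succ_iff.mp (Finset.mem_range.mp hj))
  have hspos : ∀ ν ∈ s, 0 < ν := by
    intro ν hν
    obtain ⟨j, _, rfl⟩ := Finset.mem_image.mp hν
    exact hpos j
  have hfd : ∀ ν ∈ s, FiniteDimensional ℝ (Eig A ν) := by
    intro ν hν
    have hνne : (-ν) ≠ 0 := by
      have := hspos ν hν; intro h; rw [neg_eq_zero] at h; linarith
    exact eig_findim hcomp (-ν) hνne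
  have hcount : ∀ ν ∈ s,
      ((Finset.range (k+1)).filter (fun j => μ j = ν)).card ≤ Module.finrank ℝ (Eig A ν) := by
    intro ν hν
    have hν0 : 0 < ν := hspos ν hν
    obtain ⟨j0, _, hj0eq⟩ := Finset.mem_image.mp hν
    have hT : {i : ℕ | μ i = ν}.Finite := by
      by_contra hinf
      have h1 : Nat.card {i : ℕ | μ i = ν} = 0 := by
        rw [Nat.card_coe_set_eq]
        exact Set.Infinite.ncard hinf
      have h2 := hmult ν hν0
      rw [h1] at h2
      have hfd' : FiniteDimensional ℝ
          (Module.End.eigenspace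
            (A : lp (fun _ : ℕ => ℝ) 2 →ₗ[ℝ] lp (fun _ : ℕ => ℝ) 2) (-ν)) := hfd ν hν
      have h3 : Module.End.eigenspace
          (A : lp (fun _ : ℕ => ℝ) 2 →ₗ[ℝ] lp (fun _ : ℕ => ℝ) 2) (-ν) = ⊥ :=
        Submodule.finrank_eq_zero.mp h2.symm
      have h4 : Module.End.HasEigenvalue
          (A : lp (fun _ : ℕ => ℝ) 2 →ₗ[ℝ] lp (fun _ : ℕ => ℝ) 2) (-ν) :=
        (henum ν hν0).mpr ⟨j0, hj0eq⟩
      exact h4 h3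
    have h5 : (((Finset.range (k+1)).filter (fun j => μ j = ν)) : Set ℕ) ⊆ {i | μ i = ν} := by
      intro i hi
      simp only [Finset.coe_filter, Set.mem_setOf_eq] at hi
      exact hi.2
    have h6 := Set.ncard_le_ncard h5 hT
    rw [Set.ncard_coe_finset] at h6
    have h7 : {i : ℕ | μ i = ν}.ncard = Nat.card {i : ℕ | μ i = ν} :=
      (Nat.card_coe_set_eq _).symm
    rw [h7, hmult ν hν0] at h6
    exact h6
  have hsumcard : k + 1 = ∑ ν ∈ s, ((Finset.range (k+1)).filter (fun j => μ j = ν)).card := by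
    have := Finset.card_eq_sum_card_fiberwise
      (f := μ) (s := Finset.range (k+1)) (t := s) (fun x hx => Finset.mem_image_of_mem μ hx)
    simpa using this
  obtain ⟨hVfd, hVrank⟩ := findim_sup hsym s hfd
  have hrank : k + 1 ≤ Module.finrank ℝ ↥(s.sup (Eig A)) := by
    calc k + 1 = ∑ ν ∈ s, ((Finset.range (k+1)).filter (fun j => μ j = ν)).card := hsumcard
      _ ≤ ∑ ν ∈ s, Module.finrank ℝ (Eig A ν) := Finset.sum_le_sum hcount
      _ ≤ Module.finrank ℝ ↥(s.sup (Eig A)) := hVrank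
  have hform := form_le_on_sup hsym s (μ k) hsc
  obtain ⟨x, hxne, hxQ⟩ := descend hp ht hρ hA k (μ k) (s.sup (Eig A)) hVfd hform hrank
  have hrpos : (0:ℝ) < p ^ (ρ * (k:ℝ)) := Real.rpow_pos_of_pos hp0 _
  have hgt : μ 0 < p ^ (ρ * (k:ℝ)) * μ k := by
    have h1 := mul_lt_mul_of_pos_left hcon hrpos
    rw [← mul_assoc, ← Real.rpow_add hp0] at h1
    rw [show ρ * (k:ℝ) + -(ρ * (k:ℝ)) = 0 by ring, Real.rpow_zero, one_mul] at h1
    exact h1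
  have hcpos : (0:ℝ) < p ^ (ρ * (k:ℝ)) * μ k := mul_pos hrpos (hpos k)
  obtain ⟨ν, hν1, hν2⟩ :=
    bottom_eigenvalue hsym hcomp (p ^ (ρ * (k:ℝ)) * μ k) hcpos x hxne hxQ
  have hν0 : 0 < ν := lt_of_lt_of_le hcpos hν1
  obtain ⟨j, hj⟩ := (henum ν hν0).mp hν2
  have hle : ν ≤ μ 0 := hj ▸ hmono (Nat.zero_le j)
  linarith
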